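/- Let D = {(1,x,y,0,0) ∈ ℝ⁵ : x² + (y-1)² ≤ 1}, D₁ = {(1,x,y,0,0) : x³ - (y-1)³ ≤ 1, x ≥ 0, 0 ≤ y ≤ 1}, α(t) = (1,0,t²,t,t³), β(t) = (1,t/2,t³,-t/2,t³), γ(t) = (1,-t/2,t³,-t/2,t³) for t ∈ [0,1], K₁ = cone(D ∪ D₁ ∪ α[0,1] ∪ β[0,1] ∪ γ[0,1]) and F₁ = cone(D ∪ D₁). Then the idempotent linear map P₁ given (in standard coordinates (l,x,y,z,s)) by P₁(l,x,y,z,s) = (l, x - z, y, 0, 0) satisfies P₁(K₁) = F₁; in particular F₁ is a projectionally exposed face of K₁. -/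

import Mathlib

/-- The convex conic hull of a set in `ℝ⁵`. -/
def coneHull (S : Set (EuclideanSpace ℝ (Fin 5))) : Set (EuclideanSpace ℝ (Fin 5)) :=
  {x | ∃ c : ℝ, 0 ≤ c ∧ ∃ y ∈ convexHull ℝ S, x = c • y}

/-- The disk `D = {(1,x,y,0,0) : x² + (y-1)² ≤ 1}`. -/
def diskD : Set (EuclideanSpace ℝ (Fin 5)) :=
  {v | v 0 = 1 ∧ (v 1) ^ 2 + (v 2 - 1) ^ 2 ≤ 1 ∧ v 3 = 0 ∧ v 4 = 0}

/-- The set `D₁ = {(1,x,y,0,0) : x³ - (y-1)³ ≤ 1, x ≥ 0, 0 ≤ y ≤ 1}`. -/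
def setD1 : Set (EuclideanSpace ℝ (Fin 5)) :=
  {v | v 0 = 1 ∧ (v 1) ^ 3 - (v 2 - 1) ^ 3 ≤ 1 ∧ 0 ≤ v 1 ∧ 0 ≤ v 2 ∧ v 2 ≤ 1 ∧
    v 3 = 0 ∧ v 4 = 0}

/-- The curve `α(t) = (1, 0, t², t, t³)`. -/
noncomputable def curveA (t : ℝ) : EuclideanSpace ℝ (Fin 5) := WithLp.toLp 2 ![1, 0, t ^ 2, t, t ^ 3]

/-- The curve `β(t) = (1, t/2, t³, -t/2, t³)`. -/
noncomputable def curveB (t : ℝ) : EuclideanSpace ℝ (Fin 5) := WithLp.toLp 2 ![1, t / 2, t ^ 3, -(t / 2), t ^ 3]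

/-- The curve `γ(t) = (1, -t/2, t³, -t/2, t³)`. -/
noncomputable def curveC (t : ℝ) : EuclideanSpace ℝ (Fin 5) := WithLp.toLp 2 ![1, -(t / 2), t ^ 3, -(t / 2), t ^ 3]

noncomputable def Pmap : EuclideanSpace ℝ (Fin 5) →ₗ[ℝ] EuclideanSpace ℝ (Fin 5) where
  toFun v := WithLp.toLp 2 ![v 0, v 1 - v 3, v 2, 0, 0]
  map_add' x y := by
    ext i
    fin_cases i <;>
      simp [PiLp.add_apply, Matrix.cons_val_zero, Matrix.cons_val_one] <;> ring
  map_smul' c x := by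
    ext i
    fin_cases i <;>
      simp [PiLp.smul_apply, smul_eq_mul] <;> ring

lemma image_coneHull (P : EuclideanSpace ℝ (Fin 5) →ₗ[ℝ] EuclideanSpace ℝ (Fin 5))
    (S : Set (EuclideanSpace ℝ (Fin 5))) :
    ⇑P '' coneHull S = coneHull (⇑P '' S) := by
  ext x
  constructor
  · rintro ⟨w, ⟨c, hc, y, hy, rfl⟩, rfl⟩
    exact ⟨c, hc, P y, by rw [← P.image_convexHull]; exact Set.mem_image_of_mem _ hy,
      by simp [map_smul]⟩
  · rintro ⟨c, hc, y, hy, rfl⟩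
    rw [← P.image_convexHull] at hy
    obtain ⟨z, hz, rfl⟩ := hy
    exact ⟨c • z, ⟨c, hc, z, hz, rfl⟩, by simp [map_smul]⟩

lemma Pmap_apply (v : EuclideanSpace ℝ (Fin 5)) : Pmap v = ![v 0, v 1 - v 3, v 2, 0, 0] := rfl

lemma Pmap_fix {v : EuclideanSpace ℝ (Fin 5)} (h3 : v 3 = 0) (h4 : v 4 = 0) :
    Pmap v = v := by
  ext i
  rw [Pmap_apply]
  fin_cases i <;> simp [h3, h4]

lemma Pmap_image :
    ⇑Pmap '' (diskD ∪ setD1 ∪ curveA '' Set.Icc (0 : ℝ) 1 ∪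
      curveB '' Set.Icc (0 : ℝ) 1 ∪ curveC '' Set.Icc (0 : ℝ) 1) = diskD ∪ setD1 := by
  apply subset_antisymm
  · rintro _ ⟨v, hv, rfl⟩
    rcases hv with ((((hv | hv) | ⟨t, ⟨ht0, ht1⟩, rfl⟩) | ⟨t, ⟨ht0, ht1⟩, rfl⟩) | ⟨t, ⟨ht0, ht1⟩, rfl⟩)
    · rw [Pmap_fix hv.2.2.1 hv.2.2.2]; exact Or.inl hv
    · rw [Pmap_fix hv.2.2.2.2.2.1 hv.2.2.2.2.2.2]; exact Or.inr hv
    · left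
      simp only [diskD, Set.mem_setOf_eq, Pmap_apply]
      refine ⟨by simp [curveA], ?_, by simp, by simp⟩
      simp [curveA]
      nlinarith [mul_nonneg (mul_nonneg ht0 ht0) (mul_nonneg ht0 ht0),
        mul_nonneg (mul_nonneg ht0 ht0) (sub_nonneg.2 ht1), sq_nonneg t]
    · right
      simp only [setD1, Set.mem_setOf_eq, Pmap_apply]
      have ht3 : 0 ≤ t ^ 3 := by positivity
      have ht3' : t ^ 3 ≤ 1 := by nlinarith [mul_nonneg ht0 ht0, sq_nonneg t]
      refine ⟨by simp [curveB], ?_, ?_, ?_, ?_, by simp, by simp⟩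
      · simp [curveB]
        nlinarith [mul_nonneg (mul_nonneg (sub_nonneg.2 ht3') ht3)
          (by linarith : (0:ℝ) ≤ 2 - t ^ 3)]
      · simp [curveB]; linarith
      · simp [curveB]; exact ht3
      · simp [curveB]; exact ht3'
    · left
      simp only [diskD, Set.mem_setOf_eq, Pmap_apply]
      have ht3 : 0 ≤ t ^ 3 := by positivity
      have ht3' : t ^ 3 ≤ 1 := by nlinarith [mul_nonneg ht0 ht0, sq_nonneg t]
      refine ⟨by simp [curveC], ?_, by simp, by simp⟩
      simp [curveC, abs_le]
      constructor <;> linarith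
  · rintro v (hv | hv)
    · exact ⟨v, Or.inl (Or.inl (Or.inl (Or.inl hv))), Pmap_fix hv.2.2.1 hv.2.2.2⟩
    · exact ⟨v, Or.inl (Or.inl (Or.inl (Or.inr hv))), Pmap_fix hv.2.2.2.2.2.1 hv.2.2.2.2.2.2⟩


/-- Proposition 4.3 (for `i = 1`): the idempotent linear map
`P₁(l,x,y,z,s) = (l, x - z, y, 0, 0)` maps `K₁ = cone(D ∪ D₁ ∪ α[0,1] ∪ β[0,1] ∪ γ[0,1])`
onto `F₁ = cone(D ∪ D₁)`; in particular `F₁` is a projectionally exposed face of `K₁`. -/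
theorem stmt14 :
    ∃ P : EuclideanSpace ℝ (Fin 5) →ₗ[ℝ] EuclideanSpace ℝ (Fin 5),
      (∀ v, P v = ![v 0, v 1 - v 3, v 2, 0, 0]) ∧
      (∀ v, P (P v) = P v) ∧
      ⇑P '' coneHull (diskD ∪ setD1 ∪ curveA '' Set.Icc (0 : ℝ) 1 ∪
          curveB '' Set.Icc (0 : ℝ) 1 ∪ curveC '' Set.Icc (0 : ℝ) 1) =
        coneHull (diskD ∪ setD1) := by
  refine ⟨Pmap, Pmap_apply, fun v => ?_, ?_⟩
  · have h := Pmap_apply v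
    exact Pmap_fix (by simp [h]) (by simp [h])
  · rw [image_coneHull, Pmap_image]
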